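/- Let (G,·) be a Moufang loop, S⊴G with G/S = ⟨α⟩ cyclic of order 2m, and 1≠h∈S∩Z(G). Then the subloop A = ⟨h⟩ is a normal subloop of both (G,·) and (G,*), where x*y = xy·h^{σ(i+j)} for x∈α^i, y∈α^j, and the quotient loops (G,·)/A and (G,*)/A coincide. -/

import Mathlib

/-- A Moufang loop: a loop (with two-sided inverses satisfying the inverse
properties, which hold in any Moufang loop) satisfying the Moufang identity
((xy)x)z = x(y(xz)). -/
class MufLoop (Q : Type*) extends Mul Q, One Q, Inv Q where
  one_mul : ∀ x : Q, 1 * x = x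
  mul_one : ∀ x : Q, x * 1 = x
  inv_mul_cancel_left : ∀ x y : Q, x⁻¹ * (x * y) = y
  mul_inv_cancel_left : ∀ x y : Q, x * (x⁻¹ * y) = y
  mul_inv_cancel_right : ∀ x y : Q, (x * y) * y⁻¹ = x
  inv_mul_cancel_right : ∀ x y : Q, (x * y⁻¹) * y = x
  moufang : ∀ x y z : Q, ((x * y) * x) * z = x * (y * (x * z))

/-- σ(i)=1 if i>m, 0 if i ∈ M = {-m+1,...,m}, -1 if i<1-m. -/
def sgnM (m : ℕ) (i : ℤ) : ℤ :=
  if (m : ℤ) < i then 1 else if i < 1 - (m : ℤ) then -1 else 0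

/-- Natural powers in a Moufang loop. -/
def mnpow {Q : Type*} [MufLoop Q] (a : Q) : ℕ → Q
  | 0 => 1
  | n + 1 => mnpow a n * a

/-- Integer powers in a Moufang loop. -/
def mzpow {Q : Type*} [MufLoop Q] (a : Q) : ℤ → Q
  | Int.ofNat n => mnpow a n
  | Int.negSucc n => (mnpow a (n + 1))⁻¹

/-- A subset of a magma is a subloop if it contains the unit, is closed under
multiplication, and equations are solvable within it. -/
def IsSubloopM {G : Type*} (mul : G → G → G) (one : G) (A : Set G) : Prop :=
  one ∈ A ∧ (∀ a ∈ A, ∀ b ∈ A, mul a b ∈ A) ∧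
    (∀ a ∈ A, ∀ b ∈ A, ∃ c ∈ A, mul a c = b) ∧
    (∀ a ∈ A, ∀ b ∈ A, ∃ c ∈ A, mul c a = b)

/-- A subloop A is normal if xA = Ax, x(Ay) = (xA)y and x(yA) = (xy)A. -/
def IsNormalSubloopM {G : Type*} (mul : G → G → G) (one : G) (A : Set G) : Prop :=
  IsSubloopM mul one A ∧
  (∀ x : G, (fun a => mul x a) '' A = (fun a => mul a x) '' A) ∧
  (∀ x y : G, (fun b => mul x b) '' ((fun a => mul a y) '' A)
      = (fun b => mul b y) '' ((fun a => mul x a) '' A)) ∧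
  (∀ x y : G, (fun b => mul x b) '' ((fun a => mul y a) '' A)
      = (fun a => mul (mul x y) a) '' A)

/-- The subloop generated by a subset. -/
def genSubloopM {G : Type*} (mul : G → G → G) (one : G) (T : Set G) : Set G :=
  ⋂₀ {A : Set G | IsSubloopM mul one A ∧ T ⊆ A}

/-- The nucleus of a magma: elements associating with all pairs in all positions. -/
def nucSetM {G : Type*} (mul : G → G → G) : Set G :=
  {x | ∀ y z : G, mul x (mul y z) = mul (mul x y) z ∧
        mul y (mul x z) = mul (mul y x) z ∧
        mul y (mul z x) = mul (mul y z) x}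

/-- The cyclic construction on a Moufang loop: x * y · h^{σ(ind x + ind y)}. -/
def cmulM (m : ℕ) {G : Type*} [MufLoop G] (ind : G → ℤ) (h : G) (x y : G) : G :=
  x * y * mzpow h (sgnM m (ind x + ind y))

namespace MLAux
variable {G : Type*} [MufLoop G]

def Cent (a : G) : Prop :=
  (∀ y, a*y = y*a) ∧ ∀ y z : G, a*(y*z) = (a*y)*z ∧ y*(a*z) = (y*a)*z ∧ y*(z*a) = (y*z)*a

lemma mul_inv_self (x : G) : x * x⁻¹ = 1 := by
  have := MufLoop.mul_inv_cancel_right (1:G) x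
  rwa [MufLoop.one_mul] at this

lemma inv_mul_self (x : G) : x⁻¹ * x = 1 := by
  have := MufLoop.inv_mul_cancel_right (1:G) x
  rwa [MufLoop.one_mul] at this

lemma left_cancel (a : G) {u v : G} (h : a*u = a*v) : u = v := by
  have := congrArg (a⁻¹ * ·) h
  simpa [MufLoop.inv_mul_cancel_left] using this

lemma right_cancel (a : G) {u v : G} (h : u*a = v*a) : u = v := by
  have := congrArg (· * a⁻¹) h
  simpa [MufLoop.mul_inv_cancel_right] using this

lemma cent_one : Cent (1:G) := by
  refine ⟨fun y => by rw [MufLoop.one_mul, MufLoop.mul_one], fun y z =>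
    ⟨by rw [MufLoop.one_mul, MufLoop.one_mul],
     by rw [MufLoop.one_mul, MufLoop.mul_one],
     by rw [MufLoop.mul_one, MufLoop.mul_one]⟩⟩

lemma cent_mul {a b : G} (ha : Cent a) (hb : Cent b) : Cent (a*b) := by
  obtain ⟨hac, haa⟩ := ha
  obtain ⟨hbc, hba⟩ := hb
  refine ⟨fun y => ?_, fun y z => ⟨?_, ?_, ?_⟩⟩
  · rw [← (haa b y).1, hbc y, (haa y b).1, hac y, ← (haa y b).2.1]
  · rw [← (haa b (y*z)).1, (hba y z).1, (haa (b*y) z).1, (haa b y).1]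
  · rw [← (haa b z).1, (haa y (b*z)).2.1, (hba (y*a) z).2.1, ← (haa y b).2.1]
  · rw [(haa z b).2.1, (hba y (z*a)).2.2, (haa y z).2.2, (haa (y*z) b).2.1]

lemma cent_inv {a : G} (ha : Cent a) : Cent a⁻¹ := by
  obtain ⟨hac, haa⟩ := ha
  have hcomm : ∀ y : G, a⁻¹ * y = y * a⁻¹ := by
    intro y
    apply left_cancel a
    rw [MufLoop.mul_inv_cancel_left, (haa y a⁻¹).1, hac y, MufLoop.mul_inv_cancel_right]
  refine ⟨hcomm, fun y z => ⟨?_, ?_, ?_⟩⟩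
  · apply left_cancel a
    rw [MufLoop.mul_inv_cancel_left, (haa (a⁻¹*y) z).1, MufLoop.mul_inv_cancel_left]
  · conv_rhs => rw [← MufLoop.mul_inv_cancel_left a z]
    rw [(haa (y*a⁻¹) (a⁻¹*z)).2.1, MufLoop.inv_mul_cancel_right]
  · apply right_cancel a
    rw [MufLoop.inv_mul_cancel_right, ← (haa y (z*a⁻¹)).2.2, MufLoop.inv_mul_cancel_right]

variable {h : G} (hch : Cent h)
include hch

lemma cent_mnpow (n : ℕ) : Cent (mnpow h n) := by
  induction n with
  | zero => exact cent_one
  | succ k ih => exact cent_mul ih hch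

lemma cent_mzpow (k : ℤ) : Cent (mzpow h k) := by
  cases k with
  | ofNat n => exact cent_mnpow hch n
  | negSucc n => exact cent_inv (cent_mnpow hch (n+1))

lemma mul_h_inv_mul_h {x : G} : (x*h)⁻¹ * h = x⁻¹ := by
  apply left_cancel x
  rw [← hch.1 ((x*h)⁻¹), (hch.2 x ((x*h)⁻¹)).2.1, mul_inv_self, mul_inv_self]

lemma mzpow_add_one (n : ℤ) : mzpow h n * h = mzpow h (n+1) := by
  cases n with
  | ofNat k =>
    show mnpow h k * h = mzpow h ((k:ℤ)+1)
    have : ((k:ℤ)+1) = Int.ofNat (k+1) := by rfl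
    rw [this]; rfl
  | negSucc k =>
    cases k with
    | zero =>
      show (mnpow h 1)⁻¹ * h = mzpow h (Int.negSucc 0 + 1)
      have h1 : Int.negSucc 0 + 1 = Int.ofNat 0 := by rfl
      rw [h1]
      show (mnpow h 1)⁻¹ * h = 1
      show (mnpow h 0 * h)⁻¹ * h = 1
      show ((1:G) * h)⁻¹ * h = 1
      rw [MufLoop.one_mul, inv_mul_self]
    | succ j =>
      have h1 : Int.negSucc (j+1) + 1 = Int.negSucc j := by rfl
      rw [h1]
      show (mnpow h (j+1) * h)⁻¹ * h = (mnpow h (j+1))⁻¹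
      exact mul_h_inv_mul_h hch

lemma mul_h_inv {x : G} : (x*h)⁻¹ = x⁻¹ * h⁻¹ := by
  rw [← mul_h_inv_mul_h hch (x := x), MufLoop.mul_inv_cancel_right]

lemma mzpow_sub_one (n : ℤ) : mzpow h n * h⁻¹ = mzpow h (n-1) := by
  cases n with
  | ofNat k =>
    cases k with
    | zero =>
      show mnpow h 0 * h⁻¹ = mzpow h (-1 : ℤ)
      show (1:G) * h⁻¹ = mzpow h (Int.negSucc 0)
      show (1:G) * h⁻¹ = (mnpow h 1)⁻¹
      show (1:G) * h⁻¹ = (mnpow h 0 * h)⁻¹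
      show (1:G) * h⁻¹ = ((1:G) * h)⁻¹
      rw [MufLoop.one_mul, MufLoop.one_mul]
    | succ j =>
      have h1 : (Int.ofNat (j+1)) - 1 = Int.ofNat j := by simp
      rw [h1]
      show (mnpow h j * h) * h⁻¹ = mnpow h j
      rw [MufLoop.mul_inv_cancel_right]
  | negSucc k =>
    have h1 : Int.negSucc k - 1 = Int.negSucc (k+1) := by rfl
    rw [h1]
    show (mnpow h (k+1))⁻¹ * h⁻¹ = (mnpow h (k+1) * h)⁻¹
    rw [mul_h_inv hch]

lemma mzpow_add (i j : ℤ) : mzpow h i * mzpow h j = mzpow h (i+j) := by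
  induction j using Int.induction_on with
  | zero =>
    rw [add_zero]
    show mzpow h i * (1:G) = mzpow h i
    exact MufLoop.mul_one _
  | succ k ih =>
    rw [← mzpow_add_one hch k, (hch.2 (mzpow h i) (mzpow h k)).2.2, ih, mzpow_add_one hch]
    congr 1; ring
  | pred k ih =>
    rw [← mzpow_sub_one hch (-k), ((cent_inv hch).2 (mzpow h i) (mzpow h (-k))).2.2, ih,
      mzpow_sub_one hch]
    congr 1; ring

end MLAux

/-- Cyclic construction on a Moufang loop (G,·): S ⊴ G with G/S cyclic of order 2m
(encoded by the surjective map f onto ZMod (2m), multiplicative into the additive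
group, with S the fibre of 0; ind x ∈ M is the discrete logarithm of the coset of
x, i.e. x ∈ α^{ind x}), and 1 ≠ h ∈ S ∩ Z(G).  Then the subloop A = ⟨h⟩ is normal
in both (G,·) and (G,*), where x*y = xy·h^{σ(ind x + ind y)}, the coset
decompositions modulo A agree, and the quotient loops (G,·)/A and (G,*)/A
coincide. -/
theorem stmt10 (m : ℕ) (hm : 0 < m) (G : Type*) [MufLoop G]
    (f : G → ZMod (2 * m)) (hf : ∀ x y : G, f (x * y) = f x + f y)
    (hfsurj : Function.Surjective f)
    (S : Set G) (hSnormal : IsNormalSubloopM (· * · : G → G → G) 1 S)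
    (hSker : ∀ x : G, x ∈ S ↔ f x = 0)
    (ind : G → ℤ)
    (hindM : ∀ x : G, ind x ∈ Set.Icc (1 - (m : ℤ)) (m : ℤ))
    (hind : ∀ x : G, ((ind x : ZMod (2 * m))) = f x)
    (h : G) (hh1 : h ≠ 1) (hhS : h ∈ S)
    (hhcomm : ∀ y : G, h * y = y * h)
    (hhassoc : ∀ y z : G, h * (y * z) = (h * y) * z ∧
      y * (h * z) = (y * h) * z ∧ y * (z * h) = (y * z) * h) :
    IsNormalSubloopM (· * · : G → G → G) 1 (genSubloopM (· * ·) 1 {h}) ∧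
    IsNormalSubloopM (cmulM m ind h) 1 (genSubloopM (· * ·) 1 {h}) ∧
    (∀ x : G, (fun a => x * a) '' (genSubloopM (· * · : G → G → G) 1 {h})
        = (fun a => cmulM m ind h x a) '' (genSubloopM (· * ·) 1 {h})) ∧
    (∀ x y : G, ∃ a ∈ genSubloopM (· * · : G → G → G) 1 {h},
        cmulM m ind h x y = (x * y) * a) := by
  classical
  haveI : NeZero (2*m) := ⟨by omega⟩
  have hch : MLAux.Cent h := ⟨hhcomm, hhassoc⟩
  set A : Set G := genSubloopM (· * · : G → G → G) 1 {h} with hAdef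
  set P : Set G := Set.range (mzpow h) with hPdef
  have hone : mzpow h 1 = h := by
    show mnpow h 0 * h = h
    show (1:G) * h = h
    exact MufLoop.one_mul h
  have hPsub : IsSubloopM (· * · : G → G → G) 1 P := by
    refine ⟨⟨0, rfl⟩, ?_, ?_, ?_⟩
    · rintro a ⟨i, rfl⟩ b ⟨j, rfl⟩
      exact ⟨i+j, (MLAux.mzpow_add hch i j).symm⟩
    · rintro a ⟨i, rfl⟩ b ⟨j, rfl⟩
      refine ⟨mzpow h (j-i), ⟨j-i, rfl⟩, ?_⟩
      show mzpow h i * mzpow h (j-i) = mzpow h j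
      rw [MLAux.mzpow_add hch]; congr 1; ring
    · rintro a ⟨i, rfl⟩ b ⟨j, rfl⟩
      refine ⟨mzpow h (j-i), ⟨j-i, rfl⟩, ?_⟩
      show mzpow h (j-i) * mzpow h i = mzpow h j
      rw [MLAux.mzpow_add hch]; congr 1; ring
  have hAP : A = P := by
    apply subset_antisymm
    · exact Set.sInter_subset_of_mem ⟨hPsub, Set.singleton_subset_iff.mpr ⟨(1:ℤ), hone⟩⟩
    · rintro x ⟨k, rfl⟩
      intro B hB
      obtain ⟨⟨hB1, hBmul, hBdr, hBdl⟩, hBh⟩ := hB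
      have hhB : h ∈ B := hBh rfl
      have hn : ∀ n : ℕ, mnpow h n ∈ B := by
        intro n; induction n with
        | zero => exact hB1
        | succ k ih => exact hBmul _ ih _ hhB
      cases k with
      | ofNat n => exact hn n
      | negSucc n =>
        obtain ⟨c, hcB, hc⟩ := hBdr _ (hn (n+1)) _ hB1
        have hce : c = (mnpow h (n+1))⁻¹ := by
          apply MLAux.left_cancel (mnpow h (n+1))
          rw [MLAux.mul_inv_self]
          exact hc
        show (mnpow h (n+1))⁻¹ ∈ B
        rw [← hce]; exact hcB
  have hKA : ∀ k : ℤ, mzpow h k ∈ A := by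
    intro k; rw [hAP]; exact ⟨k, rfl⟩
  have centA : ∀ a ∈ A, MLAux.Cent a := by
    intro a ha; rw [hAP] at ha; obtain ⟨k, rfl⟩ := ha; exact MLAux.cent_mzpow hch k
  have hf1 : f 1 = 0 := by
    have h2 := hf 1 1; rw [MufLoop.one_mul] at h2; exact (left_eq_add.mp h2)
  have hfh : f h = 0 := (hSker h).1 hhS
  have hfn : ∀ n : ℕ, f (mnpow h n) = 0 := by
    intro n; induction n with
    | zero => exact hf1
    | succ k ih => show f (mnpow h k * h) = 0; rw [hf, ih, hfh, add_zero]
  have hfz : ∀ k : ℤ, f (mzpow h k) = 0 := by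
    intro k; cases k with
    | ofNat n => exact hfn n
    | negSucc n =>
      have h2 := hf (mnpow h (n+1)) (mnpow h (n+1))⁻¹
      rw [MLAux.mul_inv_self, hf1, hfn] at h2
      show f ((mnpow h (n+1))⁻¹) = 0
      simpa using h2.symm
  have hfA : ∀ a ∈ A, f a = 0 := by
    intro a ha; rw [hAP] at ha; obtain ⟨k, rfl⟩ := ha; exact hfz k
  have hIU : ∀ i j : ℤ, ((i : ZMod (2*m)) = (j : ZMod (2*m))) →
      i ∈ Set.Icc (1-(m:ℤ)) (m:ℤ) → j ∈ Set.Icc (1-(m:ℤ)) (m:ℤ) → i = j := by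
    intro i j hij hi hj
    rw [Set.mem_Icc] at hi hj
    have hz : ((i - j : ℤ) : ZMod (2*m)) = 0 := by push_cast; rw [hij]; ring
    have hd : ((2*m : ℕ) : ℤ) ∣ (i - j) := (ZMod.intCast_zmod_eq_zero_iff_dvd _ _).mp hz
    have := Int.eq_zero_of_abs_lt_dvd hd (by rw [abs_lt]; push_cast; omega)
    omega
  have hindA : ∀ a ∈ A, ind a = 0 := by
    intro a ha
    refine hIU _ _ ?_ (hindM a) (by rw [Set.mem_Icc]; omega)
    rw [hind a, hfA a ha]; simp
  have hindmr : ∀ x a, a ∈ A → ind (x*a) = ind x := by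
    intro x a ha
    refine hIU _ _ ?_ (hindM _) (hindM _)
    rw [hind, hind, hf, hfA a ha, add_zero]
  have hindml : ∀ a x, a ∈ A → ind (a*x) = ind x := by
    intro a x ha
    refine hIU _ _ ?_ (hindM _) (hindM _)
    rw [hind, hind, hf, hfA a ha, zero_add]
  have hsgn0 : ∀ i : ℤ, i ∈ Set.Icc (1-(m:ℤ)) (m:ℤ) → sgnM m i = 0 := by
    intro i hi; rw [Set.mem_Icc] at hi
    unfold sgnM
    rw [if_neg (by omega), if_neg (by omega)]
  have hcr : ∀ x a, a ∈ A → cmulM m ind h x a = x * a := by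
    intro x a ha
    unfold cmulM
    rw [hindA a ha, add_zero, hsgn0 _ (hindM x)]
    exact MufLoop.mul_one _
  have hcl : ∀ a x, a ∈ A → cmulM m ind h a x = a * x := by
    intro a x ha
    unfold cmulM
    rw [hindA a ha, zero_add, hsgn0 _ (hindM x)]
    exact MufLoop.mul_one _
  have g1 : IsNormalSubloopM (· * · : G → G → G) 1 A := by
    refine ⟨by rw [hAP]; exact hPsub, ?_, ?_, ?_⟩
    · intro x; exact Set.image_congr fun a ha => ((centA a ha).1 x).symm
    · intro x y
      rw [Set.image_image, Set.image_image]
      exact Set.image_congr fun a ha => ((centA a ha).2 x y).2.1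
    · intro x y
      rw [Set.image_image]
      exact Set.image_congr fun a ha => ((centA a ha).2 x y).2.2
  have hA1 : (1:G) ∈ A := g1.1.1
  refine ⟨g1, ⟨⟨hA1, ?_, ?_, ?_⟩, ?_, ?_, ?_⟩, ?_, ?_⟩
  · intro a ha b hb; rw [hcr a b hb]; exact g1.1.2.1 a ha b hb
  · intro a ha b hb
    obtain ⟨c, hc, hcab⟩ := g1.1.2.2.1 a ha b hb
    exact ⟨c, hc, by rw [hcr a c hc]; exact hcab⟩
  · intro a ha b hb
    obtain ⟨c, hc, hcab⟩ := g1.1.2.2.2 a ha b hb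
    exact ⟨c, hc, by rw [hcl c a hc]; exact hcab⟩
  · intro x
    exact Set.image_congr fun a ha => by
      rw [hcr x a ha, hcl a x ha]; exact ((centA a ha).1 x).symm
  · intro x y
    rw [Set.image_image, Set.image_image]
    refine Set.image_congr fun a ha => ?_
    rw [hcl a y ha, hcr x a ha]
    unfold cmulM
    rw [hindml a y ha, hindmr x a ha, ((centA a ha).2 x y).2.1]
  · intro x y
    rw [Set.image_image]
    refine Set.image_congr fun a ha => ?_
    rw [hcr y a ha, hcr (cmulM m ind h x y) a ha]
    unfold cmulM
    rw [hindmr y a ha, ((centA a ha).2 x y).2.2]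
    have hKc : MLAux.Cent (mzpow h (sgnM m (ind x + ind y))) := MLAux.cent_mzpow hch _
    rw [← (hKc.2 (x*y) a).2.2, (centA a ha).1 (mzpow h (sgnM m (ind x + ind y))),
      ((centA a ha).2 (x*y) (mzpow h (sgnM m (ind x + ind y)))).2.2]
  · intro x
    exact Set.image_congr fun a ha => (hcr x a ha).symm
  · intro x y
    exact ⟨mzpow h (sgnM m (ind x + ind y)), hKA _, rfl⟩
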